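/- For each integer m ≥ 2, let r_m denote the unique positive real root of the equation x^m + x^{m-1} = 1. Then m·(1 − r_m) tends to ln 2 as m tends to infinity. -/

import Mathlib

/-- `NStep A k u v`: there is a directed walk of length `k` from `u` to `v`
in the digraph with arc relation `A`. -/
def NStep {V : Type*} (A : V → V → Prop) : ℕ → V → V → Prop
  | 0 => Eq
  | k + 1 => fun u w => ∃ x, A u x ∧ NStep A k x w

/-- An oriented simple graph: the arc relation has no loops and no 2-cycles. -/
def Oriented {V : Type*} (A : V → V → Prop) : Prop :=
  (∀ v, ¬ A v v) ∧ ∀ u v, A u v → ¬ A v u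

/-- `N_k^+(v)`: the set of vertices `u` with `d(v,u) = k`, where `d` is the
shortest directed-path distance and `d(v,v)` is the length of the shortest
directed cycle through `v` (never `0`).  (Intended for `k ≥ 1`.) -/
def outNbhd {V : Type*} (A : V → V → Prop) (k : ℕ) (v : V) : Set V :=
  {u | NStep A k v u ∧ ∀ j, 1 ≤ j → j < k → ¬ NStep A j v u}

/-- `N_k^-(v)`: the set of vertices `u` with `d(u,v) = k`. -/
def inNbhd {V : Type*} (A : V → V → Prop) (k : ℕ) (v : V) : Set V :=
  {u | NStep A k u v ∧ ∀ j, 1 ≤ j → j < k → ¬ NStep A j u v}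

/-- `d_k^+(v) = |N_k^+(v)|`. -/
noncomputable def outDeg {V : Type*} (A : V → V → Prop) (k : ℕ) (v : V) : ℕ :=
  (outNbhd A k v).ncard

/-- `d_k^-(v) = |N_k^-(v)|`. -/
noncomputable def inDeg {V : Type*} (A : V → V → Prop) (k : ℕ) (v : V) : ℕ :=
  (inNbhd A k v).ncard

/-- `N_k^+(S)`: the set of vertices `u` with `min_{s ∈ S} d(s,u) = k`. -/
def setOutNbhd {V : Type*} (A : V → V → Prop) (k : ℕ) (S : Set V) : Set V :=
  {u | (∃ s ∈ S, NStep A k s u) ∧ ∀ j, 1 ≤ j → j < k → ∀ s ∈ S, ¬ NStep A j s u}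

/-- `d_k^+(S) = |N_k^+(S)|`. -/
noncomputable def setOutDeg {V : Type*} (A : V → V → Prop) (k : ℕ) (S : Set V) : ℕ :=
  (setOutNbhd A k S).ncard

/-- A vertex is a Seymour vertex if `d_1^+(v) ≤ d_2^+(v)`. -/
def SeymourVertex {V : Type*} (A : V → V → Prop) (v : V) : Prop :=
  outDeg A 1 v ≤ outDeg A 2 v

/-- A digraph is strongly connected if every vertex reaches every other by a
directed path. -/
def StronglyConnected {V : Type*} (A : V → V → Prop) : Prop :=
  ∀ u v : V, ∃ k, NStep A k u v

/-- A digraph is `m`-free if it contains no directed cycle of length at most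
`m` (equivalently, no closed walk of length between `1` and `m`). -/
def MFree {V : Type*} (A : V → V → Prop) (m : ℕ) : Prop :=
  ∀ v, ∀ k, 1 ≤ k → k ≤ m → ¬ NStep A k v v

/-- `D` is a `λ`-counterexample (to the SNC): `d_2^+(v) < λ·d_1^+(v)` for
every vertex `v`. -/
def IsLambdaCounterexample {V : Type*} (A : V → V → Prop) (lam : ℝ) : Prop :=
  ∀ v, (outDeg A 2 v : ℝ) < lam * (outDeg A 1 v : ℝ)

/-- `D` is an edge-minimal `λ`-counterexample: it is a `λ`-counterexample and
no digraph obtained from it by deleting one or more edges is one. -/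
def EdgeMinimalCounterexample {V : Type*} (A : V → V → Prop) (lam : ℝ) : Prop :=
  IsLambdaCounterexample A lam ∧
    ∀ B : V → V → Prop, (∀ u v, B u v → A u v) → B ≠ A →
      ¬ IsLambdaCounterexample B lam

/-- If `r m` denotes the unique positive real root of
`x^m + x^(m-1) = 1` (which lies in `(0,1)`), then `m·(1 - r m) → ln 2` as
`m → ∞`. -/
theorem stmt_13 (r : ℕ → ℝ)
    (hr : ∀ m, 2 ≤ m → 0 < r m ∧ r m < 1 ∧ r m ^ m + r m ^ (m - 1) = 1) :
    Filter.Tendsto (fun m : ℕ => (m : ℝ) * (1 - r m)) Filter.atTop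
      (nhds (Real.log 2)) := by
  -- key logarithmic identity
  have hneg : ∀ m : ℕ, 2 ≤ m →
      - Real.log (r m) = Real.log (1 + r m) / ((m : ℝ) - 1) := by
    intro m hm
    obtain ⟨hpos, hlt, heq⟩ := hr m hm
    have hm1 : (0:ℝ) < (m : ℝ) - 1 := by
      have : (2:ℝ) ≤ (m:ℝ) := by exact_mod_cast hm
      linarith
    have hprod : r m ^ (m - 1) * (1 + r m) = 1 := by
      have h1 : r m ^ m = r m ^ (m - 1) * r m := by
        rw [← pow_succ]; congr 1; omega
      nlinarith [heq, h1]
    have hlogs := congrArg Real.log hprod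
    rw [Real.log_mul (by positivity) (by positivity), Real.log_one,
      Real.log_pow] at hlogs
    have hcast : ((m - 1 : ℕ) : ℝ) = (m : ℝ) - 1 := by
      have h1 : (1:ℕ) ≤ m := by omega
      push_cast [Nat.cast_sub h1]; ring
    rw [hcast] at hlogs
    field_simp
    linarith
  -- r m → 1
  have rT : Filter.Tendsto r Filter.atTop (nhds 1) := by
    have hlow : Filter.Tendsto (fun m : ℕ => 1 - Real.log 2 / ((m:ℝ) - 1))
        Filter.atTop (nhds 1) := by
      have h1 : Filter.Tendsto (fun m : ℕ => (m:ℝ) - 1) Filter.atTop Filter.atTop :=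
        Filter.tendsto_atTop_add_const_right _ _ tendsto_natCast_atTop_atTop
      have h2 : Filter.Tendsto (fun m : ℕ => Real.log 2 / ((m:ℝ) - 1))
          Filter.atTop (nhds 0) := Filter.Tendsto.div_atTop tendsto_const_nhds h1
      have := (tendsto_const_nhds (x := (1:ℝ)) (f := Filter.atTop (α := ℕ))).sub h2
      simpa using this
    refine tendsto_of_tendsto_of_tendsto_of_le_of_le' hlow tendsto_const_nhds ?_ ?_
    · filter_upwards [Filter.eventually_atTop.2 ⟨2, fun m hm => hm⟩] with m hm
      obtain ⟨hpos, hlt, _⟩ := hr m hm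
      have hm1 : (0:ℝ) < (m : ℝ) - 1 := by
        have : (2:ℝ) ≤ (m:ℝ) := by exact_mod_cast hm
        linarith
      have h1 : Real.log (r m) ≤ r m - 1 := Real.log_le_sub_one_of_pos hpos
      have h2 : Real.log (1 + r m) ≤ Real.log 2 := Real.log_le_log (by linarith) (by linarith)
      have h3 := hneg m hm
      have h4 : Real.log (1 + r m) / ((m:ℝ)-1) ≤ Real.log 2 / ((m:ℝ)-1) := by gcongr
      have : 1 - r m ≤ Real.log 2 / ((m:ℝ)-1) := by
        calc 1 - r m ≤ - Real.log (r m) := by linarith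
          _ = Real.log (1 + r m) / ((m:ℝ)-1) := h3
          _ ≤ Real.log 2 / ((m:ℝ)-1) := h4
      linarith
    · filter_upwards [Filter.eventually_atTop.2 ⟨2, fun m hm => hm⟩] with m hm
      exact le_of_lt (hr m hm).2.1
  -- H m := m * (-log r m) → log 2
  set H : ℕ → ℝ := fun m => (m:ℝ) * (-Real.log (r m)) with hH
  have HT : Filter.Tendsto H Filter.atTop (nhds (Real.log 2)) := by
    have hlog2 : Filter.Tendsto (fun m : ℕ => Real.log (1 + r m))
        Filter.atTop (nhds (Real.log 2)) := by
      have h12 : Filter.Tendsto (fun m : ℕ => 1 + r m) Filter.atTop (nhds 2) := by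
        have := (tendsto_const_nhds (x := (1:ℝ)) (f := Filter.atTop (α := ℕ))).add rT
        norm_num at this
        exact this
      exact ((Real.continuousAt_log (by norm_num)).tendsto).comp h12
    have hratio : Filter.Tendsto (fun m : ℕ => (m:ℝ) / ((m:ℝ) - 1))
        Filter.atTop (nhds 1) := by
      have h1 : Filter.Tendsto (fun m : ℕ => (m:ℝ) - 1) Filter.atTop Filter.atTop :=
        Filter.tendsto_atTop_add_const_right _ _ tendsto_natCast_atTop_atTop
      have h2 : Filter.Tendsto (fun m : ℕ => 1 + ((m:ℝ) - 1)⁻¹)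
          Filter.atTop (nhds 1) := by
        have := (tendsto_const_nhds (x := (1:ℝ)) (f := Filter.atTop (α := ℕ))).add
          h1.inv_tendsto_atTop
        simpa using this
      refine h2.congr' ?_
      filter_upwards [Filter.eventually_atTop.2 ⟨2, fun m hm => hm⟩] with m hm
      have hm1 : (0:ℝ) < (m : ℝ) - 1 := by
        have : (2:ℝ) ≤ (m:ℝ) := by exact_mod_cast hm
        linarith
      field_simp
      ring
    have := hratio.mul hlog2
    rw [one_mul] at this
    refine this.congr' ?_
    filter_upwards [Filter.eventually_atTop.2 ⟨2, fun m hm => hm⟩] with m hm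
    have hm1 : (0:ℝ) < (m : ℝ) - 1 := by
      have : (2:ℝ) ≤ (m:ℝ) := by exact_mod_cast hm
      linarith
    have h3 := hneg m hm
    simp only [hH]
    rw [h3]
    field_simp
  -- final squeeze
  have lowT : Filter.Tendsto (fun m : ℕ => r m * H m) Filter.atTop
      (nhds (Real.log 2)) := by
    have := rT.mul HT
    rw [one_mul] at this
    exact this
  refine tendsto_of_tendsto_of_tendsto_of_le_of_le' lowT HT ?_ ?_
  · filter_upwards [Filter.eventually_atTop.2 ⟨2, fun m hm => hm⟩] with m hm
    obtain ⟨hpos, hlt, _⟩ := hr m hm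
    have h1 : Real.log (r m)⁻¹ ≤ (r m)⁻¹ - 1 :=
      Real.log_le_sub_one_of_pos (by positivity)
    rw [Real.log_inv] at h1
    have h2 : r m * (-Real.log (r m)) ≤ 1 - r m := by
      have := mul_le_mul_of_nonneg_left h1 hpos.le
      calc r m * (-Real.log (r m)) ≤ r m * ((r m)⁻¹ - 1) := this
        _ = 1 - r m := by field_simp
    have hm0 : (0:ℝ) ≤ (m:ℝ) := Nat.cast_nonneg m
    calc r m * H m = (m:ℝ) * (r m * (-Real.log (r m))) := by simp only [hH]; ring
      _ ≤ (m:ℝ) * (1 - r m) := mul_le_mul_of_nonneg_left h2 hm0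
  · filter_upwards [Filter.eventually_atTop.2 ⟨2, fun m hm => hm⟩] with m hm
    obtain ⟨hpos, hlt, _⟩ := hr m hm
    have h1 : Real.log (r m) ≤ r m - 1 := Real.log_le_sub_one_of_pos hpos
    have hm0 : (0:ℝ) ≤ (m:ℝ) := Nat.cast_nonneg m
    have : 1 - r m ≤ -Real.log (r m) := by linarith
    calc (m:ℝ) * (1 - r m) ≤ (m:ℝ) * (-Real.log (r m)) :=
        mul_le_mul_of_nonneg_left this hm0
      _ = H m := rfl
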